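/- Bounded sequences (Lemma 3). Along the Tracking-ADMM iterations: (i) the sequences (x_{1,k},…,x_{N,k})_{k≥0} and (z_{1,k},…,z_{N,k})_{k≥0} are bounded (i.e. sup_k Σ_i ‖x_{i,k}‖ < ∞ and sup_k Σ_i ‖z_{i,k}‖ < ∞); (ii) the consensus-error sequences (e^d_{1,k},…,e^d_{N,k})_{k≥0} and (e^λ_{1,k},…,e^λ_{N,k})_{k≥0} are bounded. -/

import Mathlib

open Finset
open scoped RealInnerProductSpace

noncomputable section TrackingADMMAux

/-- The mixing linear map on the stacked space. -/
def TLmap (N p : ℕ) (W : Matrix (Fin N) (Fin N) ℝ) :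
    PiLp 2 (fun _ : Fin N => EuclideanSpace ℝ (Fin p)) →ₗ[ℝ]
      PiLp 2 (fun _ : Fin N => EuclideanSpace ℝ (Fin p)) where
  toFun v := WithLp.toLp 2 (fun i => ∑ j, W i j • v j)
  map_add' u v := by
    refine PiLp.ext fun i => ?_
    simp [WithLp.ofLp_toLp, PiLp.add_apply, smul_add, Finset.sum_add_distrib]
  map_smul' r v := by
    refine PiLp.ext fun i => ?_
    simp [WithLp.ofLp_toLp, PiLp.smul_apply, Finset.smul_sum, smul_comm r]

/-- Summation of the coordinates, as a linear map. -/
def sumLmap (N p : ℕ) :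
    PiLp 2 (fun _ : Fin N => EuclideanSpace ℝ (Fin p)) →ₗ[ℝ] EuclideanSpace ℝ (Fin p) where
  toFun v := ∑ i, v i
  map_add' u v := by simp [PiLp.add_apply, Finset.sum_add_distrib]
  map_smul' r v := by simp [PiLp.smul_apply, Finset.smul_sum]

variable {N p : ℕ}

lemma TLmap_apply (W : Matrix (Fin N) (Fin N) ℝ)
    (v : PiLp 2 (fun _ : Fin N => EuclideanSpace ℝ (Fin p))) (i : Fin N) :
    TLmap N p W v i = ∑ j, W i j • v j := rfl

lemma pil2_norm_le_sum (w : PiLp 2 (fun _ : Fin N => EuclideanSpace ℝ (Fin p))) :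
    ‖w‖ ≤ ∑ i, ‖w i‖ := by
  have h : ‖w‖ ^ 2 ≤ (∑ i, ‖w i‖) ^ 2 := by
    rw [PiLp.norm_sq_eq_of_L2]
    exact Finset.sum_sq_le_sq_sum_of_nonneg fun i _ => norm_nonneg _
  calc ‖w‖ = Real.sqrt (‖w‖ ^ 2) := (Real.sqrt_sq (norm_nonneg _)).symm
    _ ≤ Real.sqrt ((∑ i, ‖w i‖) ^ 2) := Real.sqrt_le_sqrt h
    _ = ∑ i, ‖w i‖ := Real.sqrt_sq (Finset.sum_nonneg fun i _ => norm_nonneg _)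

lemma pil2_coord_le_norm (w : PiLp 2 (fun _ : Fin N => EuclideanSpace ℝ (Fin p)))
    (i : Fin N) : ‖w i‖ ≤ ‖w‖ := by
  have h : ‖w i‖ ^ 2 ≤ ‖w‖ ^ 2 := by
    rw [PiLp.norm_sq_eq_of_L2 _ w]
    exact Finset.single_le_sum (f := fun j => ‖w j‖ ^ 2) (fun j _ => sq_nonneg _) (Finset.mem_univ i)
  calc ‖w i‖ = Real.sqrt (‖w i‖ ^ 2) := (Real.sqrt_sq (norm_nonneg _)).symm
    _ ≤ Real.sqrt (‖w‖ ^ 2) := Real.sqrt_le_sqrt h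
    _ = ‖w‖ := Real.sqrt_sq (norm_nonneg _)

lemma rowgap (W : Matrix (Fin N) (Fin N) ℝ) (hWrow : ∀ i, ∑ j, W i j = 1)
    (v : Fin N → EuclideanSpace ℝ (Fin p)) (i : Fin N) :
    ∑ j, W i j * ‖v j - ∑ l, W i l • v l‖ ^ 2
      = ∑ j, W i j * ‖v j‖ ^ 2 - ‖∑ l, W i l • v l‖ ^ 2 := by
  set m := ∑ l, W i l • v l with hm
  have h2 : ∑ j, W i j * ⟪v j, m⟫ = ‖m‖ ^ 2 := by
    have : ∀ j ∈ Finset.univ, W i j * ⟪v j, m⟫ = ⟪W i j • v j, m⟫ := by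
      intro j _; rw [real_inner_smul_left]
    rw [Finset.sum_congr rfl this, ← sum_inner, ← hm, real_inner_self_eq_norm_sq]
  have h1 : ∀ j ∈ Finset.univ,
      W i j * ‖v j - m‖ ^ 2
        = W i j * ‖v j‖ ^ 2 - 2 * (W i j * ⟪v j, m⟫) + W i j * ‖m‖ ^ 2 := by
    intro j _; rw [norm_sub_sq_real]; ring
  rw [Finset.sum_congr rfl h1, Finset.sum_add_distrib, Finset.sum_sub_distrib,
    ← Finset.mul_sum, h2, ← Finset.sum_mul, hWrow i]
  ring

lemma gap_total (W : Matrix (Fin N) (Fin N) ℝ)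
    (hWrow : ∀ i, ∑ j, W i j = 1) (hWcol : ∀ j, ∑ i, W i j = 1)
    (v : PiLp 2 (fun _ : Fin N => EuclideanSpace ℝ (Fin p))) :
    ‖v‖ ^ 2 - ‖TLmap N p W v‖ ^ 2
      = ∑ i, ∑ j, W i j * ‖v j - ∑ l, W i l • v l‖ ^ 2 := by
  rw [PiLp.norm_sq_eq_of_L2, PiLp.norm_sq_eq_of_L2]
  have : ∑ i, ∑ j, W i j * ‖v j - ∑ l, W i l • v l‖ ^ 2
      = ∑ i, (∑ j, W i j * ‖v j‖ ^ 2 - ‖∑ l, W i l • v l‖ ^ 2) :=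
    Finset.sum_congr rfl fun i _ => rowgap W hWrow v i
  rw [this, Finset.sum_sub_distrib]
  congr 1
  rw [Finset.sum_comm]
  refine Finset.sum_congr rfl fun j _ => ?_
  rw [← Finset.sum_mul, hWcol j, one_mul]

lemma strict_contraction (W : Matrix (Fin N) (Fin N) ℝ)
    (hWnn : ∀ i j, 0 ≤ W i j) (hWdiag : ∀ i, 0 < W i i)
    (hWrow : ∀ i, ∑ j, W i j = 1) (hWcol : ∀ j, ∑ i, W i j = 1)
    (hWconn : (SimpleGraph.fromRel (fun i j : Fin N => 0 < W i j)).Connected)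
    (v : PiLp 2 (fun _ : Fin N => EuclideanSpace ℝ (Fin p)))
    (hsum : ∑ i, v i = 0) (hv : v ≠ 0) :
    ‖TLmap N p W v‖ < ‖v‖ := by
  have gap := gap_total W hWrow hWcol v
  have hterm : ∀ i ∈ Finset.univ, (0:ℝ) ≤ ∑ j, W i j * ‖v j - ∑ l, W i l • v l‖ ^ 2 :=
    fun i _ => Finset.sum_nonneg fun j _ =>
      mul_nonneg (hWnn i j) (sq_nonneg _)
  have hgap0 : 0 < ‖v‖ ^ 2 - ‖TLmap N p W v‖ ^ 2 := by
    rcases lt_or_eq_of_le (Finset.sum_nonneg hterm) with h | h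
    · rw [gap]; exact h
    exfalso
    have hzero : ∀ i ∈ Finset.univ, ∑ j, W i j * ‖v j - ∑ l, W i l • v l‖ ^ 2 = 0 :=
      (Finset.sum_eq_zero_iff_of_nonneg hterm).mp h.symm
    have hzero2 : ∀ i j, W i j * ‖v j - ∑ l, W i l • v l‖ ^ 2 = 0 := by
      intro i j
      have := (Finset.sum_eq_zero_iff_of_nonneg
        (fun j _ => mul_nonneg (hWnn i j) (sq_nonneg _))).mp (hzero i (Finset.mem_univ i))
      exact this j (Finset.mem_univ j)
    have hadj : ∀ i j, 0 < W i j → v j = v i := by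
      intro i j hij
      have hji : v j = ∑ l, W i l • v l := by
        have := hzero2 i j
        rcases mul_eq_zero.mp this with h' | h'
        · exact absurd h' (ne_of_gt hij)
        · have := pow_eq_zero_iff (n := 2) (by norm_num) |>.mp h'
          have := norm_eq_zero.mp this
          exact sub_eq_zero.mp this
      have hii : v i = ∑ l, W i l • v l := by
        have := hzero2 i i
        rcases mul_eq_zero.mp this with h' | h'
        · exact absurd h' (ne_of_gt (hWdiag i))
        · have := pow_eq_zero_iff (n := 2) (by norm_num) |>.mp h'
          have := norm_eq_zero.mp this
          exact sub_eq_zero.mp this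
      rw [hji, ← hii]
    have hwalk : ∀ i j : Fin N,
        (SimpleGraph.fromRel fun i j : Fin N => 0 < W i j).Walk i j → v i = v j := by
      intro i j w
      induction w with
      | nil => rfl
      | cons h q ih =>
        rw [SimpleGraph.fromRel_adj] at h
        rcases h.2 with hab | hba
        · exact ((hadj _ _ hab).symm).trans ih
        · exact (hadj _ _ hba).trans ih
    have hconst : ∀ i j : Fin N, v i = v j := by
      intro i j
      obtain ⟨w⟩ := hWconn.preconnected i j
      exact hwalk i j w
    obtain ⟨i0, hi0⟩ : ∃ i, v i ≠ 0 := by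
      by_contra hall
      push_neg at hall
      exact hv (PiLp.ext fun i => by simpa using hall i)
    have : ∑ i, v i = (N : ℕ) • v i0 := by
      rw [Finset.sum_congr rfl fun i _ => hconst i i0, Finset.sum_const,
        Finset.card_univ, Fintype.card_fin]
    rw [this, ← Nat.cast_smul_eq_nsmul ℝ] at hsum
    have hN0 : 0 < N := Fin.pos i0
    rcases smul_eq_zero.mp hsum with h' | h'
    · exact absurd h' (Nat.cast_ne_zero.mpr (Nat.pos_iff_ne_zero.mp hN0))
    · exact hi0 h'
  have := sub_pos.mp hgap0
  exact lt_of_pow_lt_pow_left₀ 2 (norm_nonneg v) this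

lemma exists_sigma (W : Matrix (Fin N) (Fin N) ℝ)
    (hWnn : ∀ i j, 0 ≤ W i j) (hWdiag : ∀ i, 0 < W i i)
    (hWrow : ∀ i, ∑ j, W i j = 1) (hWcol : ∀ j, ∑ i, W i j = 1)
    (hWconn : (SimpleGraph.fromRel (fun i j : Fin N => 0 < W i j)).Connected) :
    ∃ σ : ℝ, 0 ≤ σ ∧ σ < 1 ∧
      ∀ v : PiLp 2 (fun _ : Fin N => EuclideanSpace ℝ (Fin p)),
        ∑ i, v i = 0 → ‖TLmap N p W v‖ ≤ σ * ‖v‖ := by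
  classical
  haveI : ContinuousSMul ℝ (PiLp 2 (fun _ : Fin N => EuclideanSpace ℝ (Fin p))) := inferInstance
  set F := PiLp 2 (fun _ : Fin N => EuclideanSpace ℝ (Fin p))
  set S : Set F := {v : F | ∑ i, v i = 0 ∧ ‖v‖ = 1} with hS
  have hTcont : Continuous (TLmap N p W) := (TLmap N p W).continuous_of_finiteDimensional
  have hsumcont : Continuous fun v : F => ∑ i, v i :=
    (sumLmap N p).continuous_of_finiteDimensional
  have hSclosed : IsClosed S := by
    apply IsClosed.inter
    · exact isClosed_eq hsumcont continuous_const
    · exact isClosed_eq continuous_norm continuous_const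
  have hScpt : IsCompact S := by
    apply (isCompact_closedBall (0 : F) 1).of_isClosed_subset hSclosed
    intro v hv
    simp only [Metric.mem_closedBall, dist_zero_right]
    exact le_of_eq hv.2
  have hscale : ∀ v : F, ∑ i, v i = 0 → v ≠ 0 → (‖v‖⁻¹ • v) ∈ S := by
    intro v hsum hv
    have hnv : ‖v‖ ≠ 0 := norm_ne_zero_iff.mpr hv
    constructor
    · have : ∑ i, (‖v‖⁻¹ • v) i = ‖v‖⁻¹ • ∑ i, v i := by
        rw [Finset.smul_sum]
        exact Finset.sum_congr rfl fun i _ => rfl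
      rw [this, hsum, smul_zero]
    · rw [norm_smul, norm_inv, norm_norm, inv_mul_cancel₀ hnv]
  rcases Set.eq_empty_or_nonempty S with hSe | hSne
  · refine ⟨0, le_refl _, one_pos, fun v hsum => ?_⟩
    by_cases hv : v = 0
    · simp [hv]
    · exact absurd (hscale v hsum hv) (by simp [hSe])
  · obtain ⟨v0, hv0S, hv0max'⟩ := hScpt.exists_isMaxOn hSne
      (hTcont.norm.continuousOn)
    have hv0max : ∀ u ∈ S, ‖TLmap N p W u‖ ≤ ‖TLmap N p W v0‖ := fun u hu => hv0max' hu
    refine ⟨‖TLmap N p W v0‖, norm_nonneg _, ?_, ?_⟩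
    · have hv0norm : ‖v0‖ = 1 := hv0S.2
      have hv0ne : v0 ≠ 0 := by
        intro h
        rw [h, norm_zero] at hv0norm
        exact one_ne_zero hv0norm.symm
      have := strict_contraction W hWnn hWdiag hWrow hWcol hWconn v0 hv0S.1 hv0ne
      rwa [hv0S.2] at this
    · intro v hsum
      by_cases hv : v = 0
      · simp [hv]
      · have hu := hscale v hsum hv
        have hbnd := hv0max _ hu
        have hnv : (0:ℝ) < ‖v‖ := norm_pos_iff.mpr hv
        rw [map_smul, norm_smul, norm_inv, norm_norm] at hbnd
        calc ‖TLmap N p W v‖ = ‖v‖ * (‖v‖⁻¹ * ‖TLmap N p W v‖) := by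
              field_simp
          _ ≤ ‖v‖ * ‖TLmap N p W v0‖ := by
              apply mul_le_mul_of_nonneg_left hbnd (le_of_lt hnv)
          _ = ‖TLmap N p W v0‖ * ‖v‖ := mul_comm _ _

lemma bounded_of_rec (σ G : ℝ) (hσ0 : 0 ≤ σ) (hσ1 : σ < 1)
    (m : ℕ → ℝ) (hm0 : ∀ k, 0 ≤ m k) (hrec : ∀ k, m (k + 1) ≤ σ * m k + G) :
    ∀ k, m k ≤ max (m 0) (G / (1 - σ)) := by
  intro k
  set M := max (m 0) (G / (1 - σ)) with hM
  have h1σ : 0 < 1 - σ := by linarith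
  have hGM : G ≤ M * (1 - σ) := by
    have := le_max_right (m 0) (G / (1 - σ))
    rw [div_le_iff₀ h1σ] at this
    exact this
  induction k with
  | zero => exact le_max_left _ _
  | succ k ih =>
    have h1 : m (k + 1) ≤ σ * M + G := by
      refine (hrec k).trans ?_
      have := mul_le_mul_of_nonneg_left ih hσ0
      linarith
    nlinarith

end TrackingADMMAux

/-- **Bounded sequences (Lemma 3).**
Along the Tracking-ADMM iterations: (i) the sequences `(x_{i,k})_i` and `(z_{i,k})_i` are
bounded (`sup_k Σ_i ‖x_{i,k}‖ < ∞` and `sup_k Σ_i ‖z_{i,k}‖ < ∞`); (ii) the consensus-error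
sequences `(e^d_{i,k})_i` and `(e^λ_{i,k})_i` are bounded, where `d̄_k = (1/N) Σ_i d_{i,k}`,
`λ̄_k = (1/N) Σ_i λ_{i,k}`, `e^d_{i,k} = d_{i,k} − d̄_k`, `e^λ_{i,k} = λ_{i,k} − λ̄_k`, and
`z_{i,k} = A_i x_{i,k} − d̄_k`. -/
theorem bounded_sequences
    (N p : ℕ) (hN : 0 < N) (n : Fin N → ℕ)
    (f : ∀ i : Fin N, EuclideanSpace ℝ (Fin (n i)) → ℝ)
    (hf : ∀ i, ConvexOn ℝ Set.univ (f i))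
    (X : ∀ i : Fin N, Set (EuclideanSpace ℝ (Fin (n i))))
    (hXne : ∀ i, (X i).Nonempty) (hXcvx : ∀ i, Convex ℝ (X i))
    (hXcpt : ∀ i, IsCompact (X i))
    (A : ∀ i : Fin N, EuclideanSpace ℝ (Fin (n i)) →ₗ[ℝ] EuclideanSpace ℝ (Fin p))
    (bv : Fin N → EuclideanSpace ℝ (Fin p))
    (W : Matrix (Fin N) (Fin N) ℝ)
    (hWsym : W.IsSymm)
    (hWmem : ∀ i j, W i j ∈ Set.Ico (0 : ℝ) 1)
    (hWdiag : ∀ i, 0 < W i i)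
    (hWrow : ∀ i, ∑ j, W i j = 1)
    (hWcol : ∀ j, ∑ i, W i j = 1)
    (hWconn : (SimpleGraph.fromRel (fun i j : Fin N => 0 < W i j)).Connected)
    (c : ℝ) (hc : 0 < c)
    (x : ∀ i : Fin N, ℕ → EuclideanSpace ℝ (Fin (n i)))
    (d lam : Fin N → ℕ → EuclideanSpace ℝ (Fin p))
    (hx0 : ∀ i, x i 0 ∈ X i)
    (hd0 : ∀ i, d i 0 = A i (x i 0) - bv i)
    (hxmem : ∀ i k, x i (k + 1) ∈ X i)
    (hxmin : ∀ i k, ∀ y ∈ X i,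
      f i (x i (k + 1)) + ⟪∑ j, W i j • lam j k, A i (x i (k + 1))⟫
        + c / 2 * ‖A i (x i (k + 1)) - A i (x i k) + ∑ j, W i j • d j k‖ ^ 2
      ≤ f i y + ⟪∑ j, W i j • lam j k, A i y⟫
        + c / 2 * ‖A i y - A i (x i k) + ∑ j, W i j • d j k‖ ^ 2)
    (hdup : ∀ i k, d i (k + 1) = (∑ j, W i j • d j k) + A i (x i (k + 1)) - A i (x i k))
    (hlup : ∀ i k, lam i (k + 1) = (∑ j, W i j • lam j k) + c • d i (k + 1)) :
    (∃ C : ℝ, ∀ k, (∑ i, ‖x i k‖) ≤ C) ∧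
    (∃ C : ℝ, ∀ k, (∑ i, ‖A i (x i k) - (N : ℝ)⁻¹ • ∑ j, d j k‖) ≤ C) ∧
    (∃ C : ℝ, ∀ k, (∑ i, ‖d i k - (N : ℝ)⁻¹ • ∑ j, d j k‖) ≤ C) ∧
    (∃ C : ℝ, ∀ k, (∑ i, ‖lam i k - (N : ℝ)⁻¹ • ∑ j, lam j k‖) ≤ C) := by
  classical
  have hNne : (N : ℝ) ≠ 0 := Nat.cast_ne_zero.mpr (Nat.pos_iff_ne_zero.mp hN)
  have hWnn : ∀ i j, 0 ≤ W i j := fun i j => (hWmem i j).1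
  have hxX : ∀ i k, x i k ∈ X i := by
    intro i k
    cases k with
    | zero => exact hx0 i
    | succ k => exact hxmem i k
  choose Rx hRx using fun i => (hXcpt i).isBounded.exists_norm_le
  choose RA hRA' using fun i =>
    (((hXcpt i).image (A i).continuous_of_finiteDimensional).isBounded.exists_norm_le)
  have hRA : ∀ i, ∀ y ∈ X i, ‖A i y‖ ≤ RA i := fun i y hy => hRA' i _ ⟨y, hy, rfl⟩
  have hRA0 : ∀ i, 0 ≤ RA i := fun i => by
    obtain ⟨y0, hy0⟩ := hXne i
    exact le_trans (norm_nonneg _) (hRA i y0 hy0)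
  set SRA := ∑ i, RA i with hSRA
  have hSRA0 : 0 ≤ SRA := Finset.sum_nonneg fun i _ => hRA0 i
  have claim1 : ∃ C : ℝ, ∀ k, (∑ i, ‖x i k‖) ≤ C :=
    ⟨∑ i, Rx i, fun k => Finset.sum_le_sum fun i _ => hRx i _ (hxX i k)⟩
  have hWsmulsum : ∀ (w : Fin N → EuclideanSpace ℝ (Fin p)),
      ∑ i, ∑ j, W i j • w j = ∑ j, w j := by
    intro w
    rw [Finset.sum_comm]
    refine Finset.sum_congr rfl fun j _ => ?_
    rw [← Finset.sum_smul, hWcol j, one_smul]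
  have dsum : ∀ k, ∑ i, d i k = (∑ i, A i (x i k)) - ∑ i, bv i := by
    intro k
    induction k with
    | zero =>
      rw [Finset.sum_congr rfl fun i _ => hd0 i, Finset.sum_sub_distrib]
    | succ k ih =>
      have h1 : ∑ i, d i (k + 1)
          = (∑ i, ∑ j, W i j • d j k) + ∑ i, A i (x i (k + 1)) - ∑ i, A i (x i k) := by
        rw [Finset.sum_congr rfl fun i _ => hdup i k, Finset.sum_sub_distrib,
          Finset.sum_add_distrib]
      rw [h1, hWsmulsum, ih]
      abel
  have hdbar : ∀ k, ‖(N : ℝ)⁻¹ • ∑ j, d j k‖ ≤ (N : ℝ)⁻¹ * (SRA + ‖∑ i, bv i‖) := by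
    intro k
    rw [norm_smul, norm_inv, Real.norm_natCast]
    refine mul_le_mul_of_nonneg_left ?_ (by positivity)
    rw [dsum k]
    refine (norm_sub_le _ _).trans ?_
    exact add_le_add_left
      ((norm_sum_le _ _).trans (Finset.sum_le_sum fun i _ => hRA i _ (hxX i k))) _
  have claim2 : ∃ C : ℝ, ∀ k, (∑ i, ‖A i (x i k) - (N : ℝ)⁻¹ • ∑ j, d j k‖) ≤ C := by
    refine ⟨∑ i, (RA i + (N : ℝ)⁻¹ * (SRA + ‖∑ i', bv i'‖)), fun k => ?_⟩
    refine Finset.sum_le_sum fun i _ => ?_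
    refine (norm_sub_le _ _).trans ?_
    exact add_le_add (hRA i _ (hxX i k)) (hdbar k)
  obtain ⟨σ, hσ0, hσ1, hσ⟩ := exists_sigma (p := p) W hWnn hWdiag hWrow hWcol hWconn
  set u : ℕ → PiLp 2 (fun _ : Fin N => EuclideanSpace ℝ (Fin p)) := fun k => WithLp.toLp 2 (fun i => d i k - (N : ℝ)⁻¹ • ∑ j, d j k) with hu
  set gt : ℕ → PiLp 2 (fun _ : Fin N => EuclideanSpace ℝ (Fin p)) := fun k => WithLp.toLp 2 (fun i =>
      (A i (x i (k + 1)) - A i (x i k))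
        - (N : ℝ)⁻¹ • ∑ j, (A j (x j (k + 1)) - A j (x j k))) with hgt
  have husum : ∀ k, ∑ i, u k i = 0 := by
    intro k
    simp only [hu, WithLp.ofLp_toLp]
    rw [Finset.sum_sub_distrib, Finset.sum_const, Finset.card_univ, Fintype.card_fin,
      ← Nat.cast_smul_eq_nsmul ℝ, smul_smul, mul_inv_cancel₀ hNne, one_smul, sub_self]
  have hurec : ∀ k, u (k + 1) = TLmap N p W (u k) + gt k := by
    intro k
    refine PiLp.ext fun i => ?_
    simp only [hu, hgt, PiLp.add_apply, TLmap_apply, WithLp.ofLp_toLp]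
    have hW1 : ∑ j, W i j • (d j k - (N : ℝ)⁻¹ • ∑ l, d l k)
        = (∑ j, W i j • d j k) - (N : ℝ)⁻¹ • ∑ l, d l k := by
      simp only [smul_sub]
      rw [Finset.sum_sub_distrib, ← Finset.sum_smul, hWrow i, one_smul]
    have hsd : ∑ j, d j (k + 1)
        = (∑ j, d j k) + ∑ j, (A j (x j (k + 1)) - A j (x j k)) := by
      rw [dsum (k + 1), dsum k, Finset.sum_sub_distrib]
      abel
    rw [hW1, hdup i k, hsd, smul_add]
    abel
  have hgE : ∀ k i, ‖A i (x i (k + 1)) - A i (x i k)‖ ≤ 2 * RA i := by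
    intro k i
    refine (norm_sub_le _ _).trans ?_
    have h1 := hRA i _ (hxX i (k + 1))
    have h2 := hRA i _ (hxX i k)
    linarith
  have hgt_bound : ∀ k, ‖gt k‖ ≤ 4 * SRA := by
    intro k
    refine (pil2_norm_le_sum _).trans ?_
    have hterm : ∀ i ∈ Finset.univ, ‖gt k i‖ ≤ 2 * RA i + (N : ℝ)⁻¹ * (2 * SRA) := by
      intro i _
      simp only [hgt, WithLp.ofLp_toLp]
      refine (norm_sub_le _ _).trans ?_
      refine add_le_add (hgE k i) ?_
      rw [norm_smul, norm_inv, Real.norm_natCast]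
      refine mul_le_mul_of_nonneg_left ?_ (by positivity)
      refine (norm_sum_le _ _).trans ?_
      calc ∑ j, ‖A j (x j (k + 1)) - A j (x j k)‖ ≤ ∑ j, 2 * RA j :=
            Finset.sum_le_sum fun j _ => hgE k j
        _ = 2 * SRA := by rw [← Finset.mul_sum]
    refine (Finset.sum_le_sum hterm).trans ?_
    rw [Finset.sum_add_distrib, ← Finset.mul_sum, Finset.sum_const, Finset.card_univ,
      Fintype.card_fin, nsmul_eq_mul, ← mul_assoc, mul_inv_cancel₀ hNne, one_mul]
    linarith
  have hurecn : ∀ k, ‖u (k + 1)‖ ≤ σ * ‖u k‖ + 4 * SRA := by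
    intro k
    rw [hurec k]
    refine (norm_add_le _ _).trans ?_
    exact add_le_add (hσ (u k) (husum k)) (hgt_bound k)
  have humax := bounded_of_rec σ (4 * SRA) hσ0 hσ1 (fun k => ‖u k‖)
    (fun k => norm_nonneg _) hurecn
  set Mu := max ‖u 0‖ ((4 * SRA) / (1 - σ)) with hMu
  have hMu0 : 0 ≤ Mu := le_trans (norm_nonneg _) (le_max_left _ _)
  have claim3 : ∃ C : ℝ, ∀ k, (∑ i, ‖d i k - (N : ℝ)⁻¹ • ∑ j, d j k‖) ≤ C := by
    refine ⟨N * Mu, fun k => ?_⟩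
    have heq : (∑ i, ‖d i k - (N : ℝ)⁻¹ • ∑ j, d j k‖) = ∑ i, ‖u k i‖ :=
      Finset.sum_congr rfl fun i _ => rfl
    rw [heq]
    calc ∑ i, ‖u k i‖ ≤ ∑ _i : Fin N, ‖u k‖ :=
          Finset.sum_le_sum fun i _ => pil2_coord_le_norm _ i
      _ = N * ‖u k‖ := by
          rw [Finset.sum_const, Finset.card_univ, Fintype.card_fin, nsmul_eq_mul]
      _ ≤ N * Mu := mul_le_mul_of_nonneg_left (humax k) (by positivity)
  set v : ℕ → PiLp 2 (fun _ : Fin N => EuclideanSpace ℝ (Fin p)) := fun k => WithLp.toLp 2 (fun i => lam i k - (N : ℝ)⁻¹ • ∑ j, lam j k) with hv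
  have hvsum : ∀ k, ∑ i, v k i = 0 := by
    intro k
    simp only [hv, WithLp.ofLp_toLp]
    rw [Finset.sum_sub_distrib, Finset.sum_const, Finset.card_univ, Fintype.card_fin,
      ← Nat.cast_smul_eq_nsmul ℝ, smul_smul, mul_inv_cancel₀ hNne, one_smul, sub_self]
  have hslam : ∀ k, ∑ i, lam i (k + 1) = (∑ i, lam i k) + c • ∑ i, d i (k + 1) := by
    intro k
    rw [Finset.sum_congr rfl fun i _ => hlup i k, Finset.sum_add_distrib, hWsmulsum,
      ← Finset.smul_sum]
  have hvrec : ∀ k, v (k + 1) = TLmap N p W (v k) + c • u (k + 1) := by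
    intro k
    refine PiLp.ext fun i => ?_
    simp only [hv, hu, PiLp.add_apply, PiLp.smul_apply, TLmap_apply, WithLp.ofLp_toLp]
    have hW1 : ∑ j, W i j • (lam j k - (N : ℝ)⁻¹ • ∑ l, lam l k)
        = (∑ j, W i j • lam j k) - (N : ℝ)⁻¹ • ∑ l, lam l k := by
      simp only [smul_sub]
      rw [Finset.sum_sub_distrib, ← Finset.sum_smul, hWrow i, one_smul]
    rw [hW1, hlup i k, hslam k, smul_add, smul_sub, smul_comm ((N : ℝ)⁻¹) c]
    abel
  have hvrecn : ∀ k, ‖v (k + 1)‖ ≤ σ * ‖v k‖ + c * Mu := by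
    intro k
    rw [hvrec k]
    refine (norm_add_le _ _).trans ?_
    refine add_le_add (hσ (v k) (hvsum k)) ?_
    rw [norm_smul, Real.norm_eq_abs, abs_of_pos hc]
    exact mul_le_mul_of_nonneg_left (humax (k + 1)) (le_of_lt hc)
  have hvmax := bounded_of_rec σ (c * Mu) hσ0 hσ1 (fun k => ‖v k‖)
    (fun k => norm_nonneg _) hvrecn
  have claim4 : ∃ C : ℝ, ∀ k, (∑ i, ‖lam i k - (N : ℝ)⁻¹ • ∑ j, lam j k‖) ≤ C := by
    refine ⟨N * max ‖v 0‖ ((c * Mu) / (1 - σ)), fun k => ?_⟩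
    have heq : (∑ i, ‖lam i k - (N : ℝ)⁻¹ • ∑ j, lam j k‖) = ∑ i, ‖v k i‖ :=
      Finset.sum_congr rfl fun i _ => rfl
    rw [heq]
    calc ∑ i, ‖v k i‖ ≤ ∑ _i : Fin N, ‖v k‖ :=
          Finset.sum_le_sum fun i _ => pil2_coord_le_norm _ i
      _ = N * ‖v k‖ := by
          rw [Finset.sum_const, Finset.card_univ, Fintype.card_fin, nsmul_eq_mul]
      _ ≤ N * max ‖v 0‖ ((c * Mu) / (1 - σ)) :=
          mul_le_mul_of_nonneg_left (hvmax k) (by positivity)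
  exact ⟨claim1, claim2, claim3, claim4⟩
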